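/- Let f : GL(d,ℝ)^k → ℝ be an invariant function with variation functions F₁,…,F_k. Let g₁,…,g_k : (−ε,ε) → GL(d,ℝ) be differentiable paths, and set u_i := g_i'(0)·g_i(0)⁻¹ ∈ M_d(ℝ). Then the derivative at s = 0 of the map s ↦ f(g₁(s),…,g_k(s)) equals Σ_{i=1}^{k} tr(F_i(g₁(0),…,g_k(0))·u_i). (In the paper this computes the differential of the induced function f_ᾱ on the character variety against the cocycle u representing a deformation of a representation.) -/

import Mathlib

section ExpAux

attribute [local instance] Matrix.linftyOpNormedRing Matrix.linftyOpNormedAlgebra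

/-- Auxiliary: the slope of `t ↦ exp(t • X) * A` tends to `X * A` at `0`. Stated via `slope`
and `Tendsto` so that it is independent of the choice of norm on matrices. -/
lemma exp_slope_aux (d : ℕ) (X A : Matrix (Fin d) (Fin d) ℝ) :
    Filter.Tendsto (slope (fun t : ℝ => NormedSpace.exp (t • X) * A) 0)
      (nhdsWithin 0 {(0:ℝ)}ᶜ) (nhds (X * A)) := by
  have h := ((hasDerivAt_exp_smul_const (𝕂 := ℝ) X (0:ℝ)).mul_const A)
  simp only [zero_smul, NormedSpace.exp_zero, one_mul] at h
  have h2 := hasDerivAt_iff_tendsto_slope.mp h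
  exact h2

end ExpAux

open Matrix

attribute [local instance] Matrix.normedAddCommGroup Matrix.normedSpace

noncomputable section

/-- An invariant multi-function on `GL(d,ℝ)^k`: a real-valued function on `k`-tuples of
`d × d` real matrices that is differentiable on the open set of tuples of invertible
matrices and invariant under the diagonal action of `GL(d,ℝ)` by conjugation. -/
def IsInvariantFun (d k : ℕ) (f : (Fin k → Matrix (Fin d) (Fin d) ℝ) → ℝ) : Prop :=
  DifferentiableOn ℝ f {g : Fin k → Matrix (Fin d) (Fin d) ℝ | ∀ i, IsUnit (g i)} ∧
  ∀ h : Matrix (Fin d) (Fin d) ℝ, IsUnit h →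
    ∀ g : Fin k → Matrix (Fin d) (Fin d) ℝ, (∀ i, IsUnit (g i)) →
      f (fun i => h * g i * h⁻¹) = f g

/-- `F` is the tuple of variation functions of `f` with respect to the trace form
`𝔅(X,Y) = tr (X*Y)`: the matrix `F j g` satisfies that `tr (F j g * X)` is the derivative
at `t = 0` of `t ↦ f (g₁, …, exp(tX)·g_j, …, g_k)`, for every `X`. -/
def IsVariationFun (d k : ℕ) (f : (Fin k → Matrix (Fin d) (Fin d) ℝ) → ℝ)
    (F : Fin k → (Fin k → Matrix (Fin d) (Fin d) ℝ) → Matrix (Fin d) (Fin d) ℝ) : Prop :=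
  ∀ (j : Fin k) (g : Fin k → Matrix (Fin d) (Fin d) ℝ), (∀ i, IsUnit (g i)) →
    ∀ X : Matrix (Fin d) (Fin d) ℝ,
      HasDerivAt
        (fun t : ℝ => f (Function.update g j (NormedSpace.exp (t • X) * g j)))
        (Matrix.trace (F j g * X)) 0

/-- for an invariant function `f` with variation functions `F` and
differentiable paths `g_i : (-ε,ε) → GL(d,ℝ)` with logarithmic derivatives
`u_i = g_i'(0)·g_i(0)⁻¹`, the derivative at `s = 0` of `s ↦ f (g₁(s),…,g_k(s))`
equals `Σ_i tr (F_i (g₁(0),…,g_k(0)) · u_i)`. -/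
theorem deriv_of_invariant_function_along_paths (d k : ℕ)
    (f : (Fin k → Matrix (Fin d) (Fin d) ℝ) → ℝ)
    (F : Fin k → (Fin k → Matrix (Fin d) (Fin d) ℝ) → Matrix (Fin d) (Fin d) ℝ)
    (hf : IsInvariantFun d k f) (hF : IsVariationFun d k f F)
    (ε : ℝ) (hε : 0 < ε)
    (g : Fin k → ℝ → Matrix (Fin d) (Fin d) ℝ)
    (g' : Fin k → Matrix (Fin d) (Fin d) ℝ)
    (hgdiff : ∀ i, HasDerivAt (g i) (g' i) 0)
    (hgunit : ∀ i, ∀ s ∈ Set.Ioo (-ε) ε, IsUnit (g i s)) :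
    HasDerivAt (fun s : ℝ => f (fun i => g i s))
      (∑ i, Matrix.trace (F i (fun j => g j 0) * (g' i * (g i 0)⁻¹))) 0 := by
  set g0 : Fin k → Matrix (Fin d) (Fin d) ℝ := fun j => g j 0 with hg0def
  have hunit : ∀ i, IsUnit (g0 i) := fun i => hgunit i 0 ⟨by linarith, hε⟩
  -- the set of tuples of invertible matrices is open
  have hopen : IsOpen {h : Fin k → Matrix (Fin d) (Fin d) ℝ | ∀ i, IsUnit (h i)} := by
    have : {h : Fin k → Matrix (Fin d) (Fin d) ℝ | ∀ i, IsUnit (h i)} =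
        ⋂ i, (fun h : Fin k → Matrix (Fin d) (Fin d) ℝ => (h i).det) ⁻¹' {(0:ℝ)}ᶜ := by
      ext h
      simp only [Set.mem_setOf_eq, Set.mem_iInter, Set.mem_preimage, Set.mem_compl_iff,
        Set.mem_singleton_iff]
      constructor
      · intro hh i
        exact (Matrix.isUnit_iff_isUnit_det _).mp (hh i) |>.ne_zero
      · intro hh i
        exact (Matrix.isUnit_iff_isUnit_det _).mpr (isUnit_iff_ne_zero.mpr (hh i))
    rw [this]
    exact isOpen_iInter_of_finite fun i =>
      (isOpen_compl_singleton).preimage ((continuous_apply i).matrix_det)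
  have hmem : {h : Fin k → Matrix (Fin d) (Fin d) ℝ | ∀ i, IsUnit (h i)} ∈ nhds g0 :=
    hopen.mem_nhds hunit
  have hdf : DifferentiableAt ℝ f g0 := (hf.1.differentiableAt hmem)
  set D := fderiv ℝ f g0 with hDdef
  have hD : HasFDerivAt f D g0 := hdf.hasFDerivAt
  -- key: D applied to a single-coordinate direction is given by the variation function
  have key : ∀ j : Fin k, D (Pi.single j (g' j)) =
      Matrix.trace (F j g0 * (g' j * (g0 j)⁻¹)) := by
    intro j
    set X : Matrix (Fin d) (Fin d) ℝ := g' j * (g0 j)⁻¹ with hXdef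
    have hXg : X * g0 j = g' j :=
      Matrix.nonsing_inv_mul_cancel_right _ _ ((Matrix.isUnit_iff_isUnit_det _).mp (hunit j))
    have hexp : HasDerivAt (fun t : ℝ => NormedSpace.exp (t • X) * g0 j) (g' j) 0 := by
      rw [← hXg]
      exact hasDerivAt_iff_tendsto_slope.mpr (exp_slope_aux d X (g0 j))
    have hγ : HasDerivAt
        (fun t : ℝ => Function.update g0 j (NormedSpace.exp (t • X) * g0 j))
        (Pi.single j (g' j)) 0 := by
      refine hasDerivAt_pi.mpr ?_
      intro i
      by_cases hij : i = j
      · subst hij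
        simp only [Function.update_self, Pi.single_eq_same]
        exact hexp
      · simp only [Function.update_of_ne hij, Pi.single_eq_of_ne hij]
        exact hasDerivAt_const _ _
    have h1 : HasDerivAt
        (fun t : ℝ => f (Function.update g0 j (NormedSpace.exp (t • X) * g0 j)))
        (D (Pi.single j (g' j))) 0 := by
      have hbase : Function.update g0 j (NormedSpace.exp ((0:ℝ) • X) * g0 j) = g0 := by
        simp [Function.update_eq_self]
      exact HasFDerivAt.comp_hasDerivAt 0 (by rw [hbase]; exact hD) hγ
    exact h1.unique (hF j g0 hunit X)
  -- the path in the product space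
  have hpath : HasDerivAt (fun s : ℝ => (fun i => g i s)) g' 0 := hasDerivAt_pi.mpr hgdiff
  have hcomp : HasDerivAt (fun s : ℝ => f (fun i => g i s)) (D g') 0 :=
    hD.comp_hasDerivAt 0 hpath
  have hDg' : D g' = ∑ i, Matrix.trace (F i g0 * (g' i * (g0 i)⁻¹)) := by
    conv_lhs => rw [← Finset.univ_sum_single g']
    rw [map_sum]
    exact Finset.sum_congr rfl fun j _ => key j
  rw [hDg'] at hcomp
  exact hcomp

end
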